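/- Let (s₀, s₁, s₂) be sequences of real numbers given by polynomials of the same degree d with leading coefficients α₀, α₁, α₂ where α₀ ≠ 0, and suppose the characteristic polynomial α₀t² + α₁t + α₂ has two real roots of distinct absolute values. Suppose a sequence (x_n) satisfies s₀(n)x_n + s₁(n)x_{n-1} + s₂(n)x_{n-2} = 0 for all large n, x_n ≠ 0 for all large n, and the limit L = lim x_{n+1}/x_n exists. Then L is a root of the characteristic polynomial α₀t² + α₁t + α₂. -/

import Mathlib

open Filter Polynomial Asymptotics

lemma poly_div_pow_tendsto (P : Polynomial ℝ) (d : ℕ) (h : P.degree = d) :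
    Tendsto (fun n : ℕ => P.eval (n : ℝ) / (n : ℝ) ^ d) atTop (nhds (P.coeff d)) := by
  have hnd : P.natDegree = d := natDegree_eq_of_degree_eq_some h
  have h1 : (fun x : ℝ => P.eval x) ~[atTop] fun x => P.leadingCoeff * x ^ d := by
    have := P.isEquivalent_atTop_lead
    rwa [hnd] at this
  have h2 := h1.div (Asymptotics.IsEquivalent.refl (u := fun x : ℝ => x ^ d))
  have h3 : Tendsto (fun x : ℝ => P.leadingCoeff * x ^ d / x ^ d) atTop
      (nhds P.leadingCoeff) := by
    have he : ∀ᶠ x : ℝ in atTop, P.leadingCoeff = P.leadingCoeff * x ^ d / x ^ d := by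
      filter_upwards [eventually_gt_atTop (0 : ℝ)] with y hy
      field_simp
    exact Tendsto.congr' he tendsto_const_nhds
  have h4 := h2.symm.tendsto_nhds h3
  have h5 := h4.comp (tendsto_natCast_atTop_atTop (R := ℝ))
  have : P.leadingCoeff = P.coeff d := by rw [Polynomial.leadingCoeff, hnd]
  rw [this] at h5
  exact h5

/-- Conclusion-identification part of Poincaré's theorem for order-2 linear
difference equations with polynomial coefficients: if `x_{n+1}/x_n → L`, then
`L` is a root of the characteristic polynomial `α₀t² + α₁t + α₂`. -/
theorem poincare_limit_is_root (d : ℕ) (s₀ s₁ s₂ : Polynomial ℝ)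
    (hd₀ : s₀.degree = d) (hd₁ : s₁.degree = d) (hd₂ : s₂.degree = d)
    (α₀ α₁ α₂ : ℝ)
    (hα₀ : α₀ = s₀.coeff d) (hα₁ : α₁ = s₁.coeff d) (hα₂ : α₂ = s₂.coeff d)
    (hα₀ne : α₀ ≠ 0)
    (hroots : ∃ r₁ r₂ : ℝ, |r₁| ≠ |r₂| ∧
      α₀ * r₁ ^ 2 + α₁ * r₁ + α₂ = 0 ∧ α₀ * r₂ ^ 2 + α₁ * r₂ + α₂ = 0)
    (x : ℕ → ℝ) (N : ℕ)
    (hrec : ∀ n ≥ N, s₀.eval (n : ℝ) * x n + s₁.eval (n : ℝ) * x (n - 1) +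
      s₂.eval (n : ℝ) * x (n - 2) = 0)
    (hx : ∀ n ≥ N, x n ≠ 0)
    (L : ℝ) (hL : Tendsto (fun n => x (n + 1) / x n) atTop (nhds L)) :
    α₀ * L ^ 2 + α₁ * L + α₂ = 0 := by
  have hf : Tendsto (fun n : ℕ => s₀.eval (n : ℝ) / (n : ℝ) ^ d) atTop (nhds α₀) := by
    rw [hα₀]; exact poly_div_pow_tendsto s₀ d hd₀
  have hg : Tendsto (fun n : ℕ => s₁.eval (n : ℝ) / (n : ℝ) ^ d) atTop (nhds α₁) := by
    rw [hα₁]; exact poly_div_pow_tendsto s₁ d hd₁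
  have hh : Tendsto (fun n : ℕ => s₂.eval (n : ℝ) / (n : ℝ) ^ d) atTop (nhds α₂) := by
    rw [hα₂]; exact poly_div_pow_tendsto s₂ d hd₂
  -- ratio limits
  have hA : Tendsto (fun n : ℕ => x (n - 1) / x (n - 2)) atTop (nhds L) := by
    apply Tendsto.congr' _ (hL.comp (tendsto_sub_atTop_nat 2))
    filter_upwards [eventually_ge_atTop (N + 2)] with n hn
    have h21 : n - 2 + 1 = n - 1 := by omega
    simp only [Function.comp, h21]
  have hA1 : Tendsto (fun n : ℕ => x n / x (n - 1)) atTop (nhds L) := by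
    apply Tendsto.congr' _ (hL.comp (tendsto_sub_atTop_nat 1))
    filter_upwards [eventually_ge_atTop (N + 2)] with n hn
    have h11 : n - 1 + 1 = n := by omega
    simp only [Function.comp, h11]
  have hB : Tendsto (fun n : ℕ => x n / x (n - 2)) atTop (nhds (L * L)) := by
    apply Tendsto.congr' _ (hA1.mul hA)
    filter_upwards [eventually_ge_atTop (N + 2)] with n hn
    have hx1 : x (n - 1) ≠ 0 := hx _ (by omega)
    field_simp
  have key : Tendsto (fun n : ℕ =>
      s₀.eval (n : ℝ) / (n : ℝ) ^ d * (x n / x (n - 2)) +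
      s₁.eval (n : ℝ) / (n : ℝ) ^ d * (x (n - 1) / x (n - 2)) +
      s₂.eval (n : ℝ) / (n : ℝ) ^ d) atTop
      (nhds (α₀ * L ^ 2 + α₁ * L + α₂)) := by
    have := ((hf.mul hB).add (hg.mul hA)).add hh
    simpa [sq, mul_assoc] using this
  have hzero : (fun n : ℕ =>
      s₀.eval (n : ℝ) / (n : ℝ) ^ d * (x n / x (n - 2)) +
      s₁.eval (n : ℝ) / (n : ℝ) ^ d * (x (n - 1) / x (n - 2)) +
      s₂.eval (n : ℝ) / (n : ℝ) ^ d) =ᶠ[atTop] fun _ => (0 : ℝ) := by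
    filter_upwards [eventually_ge_atTop (N + 2)] with n hn
    have h1 := hrec n (by omega)
    have hx2 : x (n - 2) ≠ 0 := hx _ (by omega)
    have hnpos : (0 : ℝ) < (n : ℝ) := by exact_mod_cast (by omega : 0 < n)
    have hn0 : (n : ℝ) ^ d ≠ 0 := ne_of_gt (pow_pos hnpos d)
    field_simp
    linear_combination h1
  have := tendsto_nhds_unique key (Tendsto.congr' hzero.symm tendsto_const_nhds)
  exact this
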